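/- Let n ≥ 2, q a prime power, W = F_q^n, and let Ω = W \ {0} be the set of the N = q^n − 1 nonzero vectors of W. Let ρ : GL(W) → Sym(Ω) be the (injective) homomorphism given by the natural action. Then the centralizer in the symmetric group Sym(Ω) of the subgroup ρ(SL(W)) equals ρ(Z(GL(W))), i.e. it consists exactly of the permutations of Ω given by v ↦ α·v for α ∈ F_q^×; in particular this centralizer is cyclic of order q − 1. -/

import Mathlib

open Matrix

/-- The permutation of the nonzero vectors of `Fin n → K` induced by an invertible matrix. -/
def glRhoFun {n : ℕ} {K : Type*} [Field K] (g : (Matrix (Fin n) (Fin n) K)ˣ)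
    (v : {v : Fin n → K // v ≠ 0}) : {v : Fin n → K // v ≠ 0} :=
  ⟨(↑g : Matrix (Fin n) (Fin n) K).mulVec v.1, by
    intro h
    apply v.2
    have h2 := congrArg ((↑g⁻¹ : Matrix (Fin n) (Fin n) K).mulVec) h
    rwa [Matrix.mulVec_mulVec, Units.inv_mul, Matrix.one_mulVec, Matrix.mulVec_zero] at h2⟩

lemma glRhoFun_comp {n : ℕ} {K : Type*} [Field K] (a b : (Matrix (Fin n) (Fin n) K)ˣ)
    (v : {v : Fin n → K // v ≠ 0}) : glRhoFun a (glRhoFun b v) = glRhoFun (a * b) v := by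
  apply Subtype.ext
  simp [glRhoFun, Matrix.mulVec_mulVec, Units.val_mul]

lemma glRhoFun_inv_comp {n : ℕ} {K : Type*} [Field K] (g : (Matrix (Fin n) (Fin n) K)ˣ)
    (v : {v : Fin n → K // v ≠ 0}) : glRhoFun g⁻¹ (glRhoFun g v) = v := by
  rw [glRhoFun_comp, inv_mul_cancel]
  apply Subtype.ext
  simp [glRhoFun]

/-- The natural permutation action of `GL_n(K)` on the set of nonzero vectors of `K^n`,
as a homomorphism to the symmetric group. -/
def glRho (n : ℕ) (K : Type*) [Field K] :
    (Matrix (Fin n) (Fin n) K)ˣ →* Equiv.Perm {v : Fin n → K // v ≠ 0} :=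
  MonoidHom.mk' (fun g =>
    { toFun := glRhoFun g
      invFun := glRhoFun g⁻¹
      left_inv := fun v => glRhoFun_inv_comp g v
      right_inv := fun v => by
        have := glRhoFun_inv_comp g⁻¹ v
        rwa [inv_inv] at this })
    (fun a b => Equiv.ext fun v => (glRhoFun_comp a b v).symm)

section Aux

variable {n : ℕ} {K : Type*} [Field K] [DecidableEq K]

lemma glRho_apply (g : (Matrix (Fin n) (Fin n) K)ˣ) (v : {v : Fin n → K // v ≠ 0}) :
    (glRho n K g v : Fin n → K) = (↑g : Matrix (Fin n) (Fin n) K).mulVec v.1 := rfl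

/-- Key construction: given linearly independent `v, w`, there is a determinant-one matrix
fixing `v` and sending `w` to `w + c • v`. -/
lemma exists_det_one_fix {v w : Fin n → K} (h : LinearIndependent K ![v, w]) (c : K) :
    ∃ M : Matrix (Fin n) (Fin n) K, M.det = 1 ∧ M.mulVec v = v ∧ M.mulVec w = w + c • v := by
  classical
  set s : Set (Fin n → K) := Set.range ![v, w] with hs_def
  have hs : LinearIndepOn K id s := (linearIndepOn_id_range_iff h.injective).mpr h
  let B := Module.Basis.extend hs
  haveI : Fintype (hs.extend (Set.subset_univ s)) := FiniteDimensional.fintypeBasisIndex B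
  have hvs : v ∈ hs.extend (Set.subset_univ s) :=
    hs.subset_extend _ ⟨0, by simp⟩
  have hws : w ∈ hs.extend (Set.subset_univ s) :=
    hs.subset_extend _ ⟨1, by simp⟩
  set iv : hs.extend (Set.subset_univ s) := ⟨v, hvs⟩ with hiv
  set iw : hs.extend (Set.subset_univ s) := ⟨w, hws⟩ with hiw
  have hvw : v ≠ w := by
    have := h.injective.ne (show (0 : Fin 2) ≠ 1 by decide)
    simpa using this
  have hne : iv ≠ iw := fun hh => hvw (congrArg Subtype.val hh)
  have hBv : B iv = v := Module.Basis.extend_apply_self hs _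
  have hBw : B iw = w := Module.Basis.extend_apply_self hs _
  set f : (Fin n → K) →ₗ[K] (Fin n → K) :=
    B.constr K (fun k => if k = iw then B iw + c • B iv else B k) with hf
  have hmat : LinearMap.toMatrix B B f = transvection iv iw c := by
    ext i j
    rw [LinearMap.toMatrix_apply, hf, Module.Basis.constr_basis]
    by_cases hj : j = iw
    · subst hj
      simp [transvection, Matrix.single, Matrix.single_apply, Matrix.one_apply, Finsupp.single_apply,
        Module.Basis.repr_self, hne.symm, eq_comm (a := i)]
    · simp [hj, transvection, Matrix.single, Matrix.single_apply, Matrix.one_apply, Finsupp.single_apply,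
        Module.Basis.repr_self, Ne.symm hj, eq_comm (a := i)]
  have hdet : LinearMap.det f = 1 := by
    rw [← LinearMap.det_toMatrix B, hmat, det_transvection_of_ne _ _ hne]
  refine ⟨LinearMap.toMatrix' f, by rw [LinearMap.det_toMatrix']; exact hdet, ?_, ?_⟩
  · have : (LinearMap.toMatrix' f).mulVec v = f v := by
      rw [← Matrix.toLin'_apply, Matrix.toLin'_toMatrix']
    rw [this, ← hBv, hf, Module.Basis.constr_basis, if_neg hne, hBv]
  · have : (LinearMap.toMatrix' f).mulVec w = f w := by
      rw [← Matrix.toLin'_apply, Matrix.toLin'_toMatrix']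
    rw [this, ← hBw, hf, Module.Basis.constr_basis, if_pos rfl, hBv, hBw]

lemma indep_symm {v w : Fin n → K} (h : LinearIndependent K ![v, w]) :
    LinearIndependent K ![w, v] := by
  rw [LinearIndependent.pair_iff] at h ⊢
  intro s t hst
  obtain ⟨ht, hs⟩ := h t s (by rwa [add_comm] at hst)
  exact ⟨hs, ht⟩

lemma exists_SL_mulVec_of_indep {v w : Fin n → K} (h : LinearIndependent K ![v, w]) :
    ∃ M : Matrix (Fin n) (Fin n) K, M.det = 1 ∧ M.mulVec v = w := by
  obtain ⟨M1, d1, h1v, h1w⟩ := exists_det_one_fix h (-1)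
  obtain ⟨M2, d2, h2w, h2v⟩ := exists_det_one_fix (indep_symm h) 1
  refine ⟨M1 * (M2 * M1), by simp [d1, d2], ?_⟩
  rw [← Matrix.mulVec_mulVec, ← Matrix.mulVec_mulVec, h1v, h2v, Matrix.mulVec_add,
    Matrix.mulVec_smul, h1v, h1w]
  simp only [one_smul, neg_one_smul]
  abel

lemma exists_indep_of_two_le (hn : 2 ≤ n) {v : Fin n → K} (hv : v ≠ 0) :
    ∃ u : Fin n → K, LinearIndependent K ![v, u] := by
  by_contra hcon
  push_neg at hcon
  have hall : ∀ u : Fin n → K, u ∈ Submodule.span K {v} := by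
    intro u
    have := (LinearIndependent.pair_iff' hv).not.1 (hcon u)
    push_neg at this
    obtain ⟨a, ha⟩ := this
    exact Submodule.mem_span_singleton.2 ⟨a, ha⟩
  have htop : Submodule.span K {v} = ⊤ := Submodule.eq_top_iff'.2 hall
  have h1 : Module.finrank K (Submodule.span K {v}) = 1 := finrank_span_singleton hv
  rw [htop] at h1
  have h2 : Module.finrank K (⊤ : Submodule K (Fin n → K)) = n := by
    rw [finrank_top]
    simp [Module.finrank_pi]
  omega

lemma exists_SL_mulVec (hn : 2 ≤ n) {v w : Fin n → K} (hv : v ≠ 0) (hw : w ≠ 0) :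
    ∃ M : Matrix (Fin n) (Fin n) K, M.det = 1 ∧ M.mulVec v = w := by
  by_cases h : ∀ a : K, a • v ≠ w
  · exact exists_SL_mulVec_of_indep ((LinearIndependent.pair_iff' hv).2 h)
  · push_neg at h
    obtain ⟨a, ha⟩ := h
    have ha0 : a ≠ 0 := by rintro rfl; rw [zero_smul] at ha; exact hw ha.symm
    obtain ⟨u, hu⟩ := exists_indep_of_two_le hn hv
    have hu0 : u ≠ 0 := by
      intro h0
      rw [LinearIndependent.pair_iff] at hu
      have := (hu 0 1 (by simp [h0])).2
      simp at this
    have huw : LinearIndependent K ![u, w] := by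
      rw [LinearIndependent.pair_iff' hu0]
      intro b hb
      have hb0 : b ≠ 0 := by rintro rfl; rw [zero_smul] at hb; exact hw hb.symm
      have : (b⁻¹ * a) • v = u := by
        rw [← smul_smul, ha, ← hb, smul_smul, inv_mul_cancel₀ hb0, one_smul]
      exact (LinearIndependent.pair_iff' hv).1 hu _ this
    obtain ⟨M1, d1, h1⟩ := exists_SL_mulVec_of_indep hu
    obtain ⟨M2, d2, h2⟩ := exists_SL_mulVec_of_indep huw
    exact ⟨M2 * M1, by simp [d1, d2], by rw [← Matrix.mulVec_mulVec, h1, h2]⟩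

/-- The scalar matrices, as units. -/
def sUnit (n : ℕ) (K : Type*) [Field K] : Kˣ →* (Matrix (Fin n) (Fin n) K)ˣ :=
  Units.map (Matrix.scalar (Fin n)).toMonoidHom

lemma sUnit_mulVec (α : Kˣ) (x : Fin n → K) :
    ((sUnit n K α : (Matrix (Fin n) (Fin n) K)ˣ) : Matrix (Fin n) (Fin n) K).mulVec x
      = (α : K) • x := by
  classical
  ext i
  simp [sUnit, Matrix.scalar, Matrix.mulVec_diagonal]

lemma sUnit_mem_center (α : Kˣ) :
    sUnit n K α ∈ Subgroup.center (Matrix (Fin n) (Fin n) K)ˣ := by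
  classical
  rw [Subgroup.mem_center_iff]
  intro g
  ext : 1
  show (g : Matrix (Fin n) (Fin n) K) * Matrix.scalar (Fin n) (α : K)
      = Matrix.scalar (Fin n) (α : K) * (g : Matrix (Fin n) (Fin n) K)
  rw [Matrix.scalar_commute]
  exact fun r => Commute.all _ _

variable (hn : 2 ≤ n)

/-- The main characterization of the centralizer. -/
lemma centralizer_iff (hn : 2 ≤ n) (σ : Equiv.Perm {v : Fin n → K // v ≠ 0}) :
    σ ∈ Subgroup.centralizer
        (Set.range fun g : Matrix.SpecialLinearGroup (Fin n) K =>
          glRho n K (Matrix.SpecialLinearGroup.toGL g)) ↔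
      ∃ α : Kˣ, ∀ v : {v : Fin n → K // v ≠ 0},
        (σ v : Fin n → K) = (α : K) • (v : Fin n → K) := by
  classical
  constructor
  · intro hσ
    rw [Subgroup.mem_centralizer_iff] at hσ
    have key : ∀ v : {v : Fin n → K // v ≠ 0}, ∃ c : K, (σ v : Fin n → K) = c • (v : Fin n → K) := by
      intro v
      by_contra hc
      push_neg at hc
      have hind : LinearIndependent K ![(v : Fin n → K), (σ v : Fin n → K)] :=
        (LinearIndependent.pair_iff' v.2).2 (fun a haa => hc a haa.symm)
      obtain ⟨M, hdet, hMv, hMw⟩ := exists_det_one_fix hind 1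
      have hcomm := hσ _ ⟨(⟨M, hdet⟩ : Matrix.SpecialLinearGroup (Fin n) K), rfl⟩
      have hgv : glRho n K (Matrix.SpecialLinearGroup.toGL ⟨M, hdet⟩) v = v :=
        Subtype.ext hMv
      have h1 := congrArg (fun τ : Equiv.Perm {v : Fin n → K // v ≠ 0} => τ v) hcomm
      simp only [Equiv.Perm.mul_apply, hgv] at h1
      have h2 : M.mulVec (σ v : Fin n → K) = (σ v : Fin n → K) := congrArg Subtype.val h1
      rw [hMw, one_smul] at h2
      exact v.2 (add_eq_left.1 h2)
    have hv0 : (fun i : Fin n => if i = ⟨0, by omega⟩ then (1 : K) else 0) ≠ 0 := by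
      intro h0
      have := congrFun h0 ⟨0, by omega⟩
      simp at this
    set v₀ : {v : Fin n → K // v ≠ 0} := ⟨_, hv0⟩ with hv₀
    obtain ⟨c, hc⟩ := key v₀
    have hc0 : c ≠ 0 := by
      rintro rfl
      rw [zero_smul] at hc
      exact (σ v₀).2 hc
    refine ⟨Units.mk0 c hc0, fun w => ?_⟩
    obtain ⟨c', hc'⟩ := key w
    obtain ⟨M, hdet, hM⟩ := exists_SL_mulVec hn v₀.2 w.2
    have hcomm := hσ _ ⟨(⟨M, hdet⟩ : Matrix.SpecialLinearGroup (Fin n) K), rfl⟩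
    have hgv : glRho n K (Matrix.SpecialLinearGroup.toGL ⟨M, hdet⟩) v₀ = w := Subtype.ext hM
    have h1 := congrArg (fun τ : Equiv.Perm {v : Fin n → K // v ≠ 0} => τ v₀) hcomm
    simp only [Equiv.Perm.mul_apply, hgv] at h1
    have h2 : M.mulVec (σ v₀ : Fin n → K) = (σ w : Fin n → K) := congrArg Subtype.val h1
    rw [hc, Matrix.mulVec_smul, hM, hc'] at h2
    have : (c - c') • (w : Fin n → K) = 0 := by rw [sub_smul, h2, sub_self]
    rcases smul_eq_zero.1 this with h | h
    · have hcc : c' = c := (sub_eq_zero.1 h).symm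
      rw [hc', hcc]
      rfl
    · exact absurd h w.2
  · rintro ⟨α, hα⟩
    rw [Subgroup.mem_centralizer_iff]
    rintro - ⟨g, rfl⟩
    refine Equiv.ext fun v => Subtype.ext ?_
    simp only [Equiv.Perm.mul_apply]
    rw [glRho_apply, hα, hα, glRho_apply, Matrix.mulVec_smul]

end Aux

theorem stmt_6 (p k q n : ℕ) (hp : p.Prime) (hk : 0 < k) (hq : q = p ^ k) (hn : 2 ≤ n)
    (K : Type*) [Field K] [Fintype K] [DecidableEq K] (hK : Fintype.card K = q) :
    Subgroup.centralizer
        (Set.range fun g : Matrix.SpecialLinearGroup (Fin n) K =>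
          glRho n K (Matrix.SpecialLinearGroup.toGL g)) =
      Subgroup.map (glRho n K) (Subgroup.center (Matrix (Fin n) (Fin n) K)ˣ) ∧
    (∀ σ : Equiv.Perm {v : Fin n → K // v ≠ 0},
      σ ∈ Subgroup.centralizer
        (Set.range fun g : Matrix.SpecialLinearGroup (Fin n) K =>
          glRho n K (Matrix.SpecialLinearGroup.toGL g)) ↔
      ∃ α : Kˣ, ∀ v : {v : Fin n → K // v ≠ 0}, (σ v : Fin n → K) = (α : K) • (v : Fin n → K)) ∧
    IsCyclic (Subgroup.centralizer
        (Set.range fun g : Matrix.SpecialLinearGroup (Fin n) K =>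
          glRho n K (Matrix.SpecialLinearGroup.toGL g))) ∧
    Nat.card (Subgroup.centralizer
        (Set.range fun g : Matrix.SpecialLinearGroup (Fin n) K =>
          glRho n K (Matrix.SpecialLinearGroup.toGL g))) = q - 1 := by
  classical
  set S := Set.range fun g : Matrix.SpecialLinearGroup (Fin n) K =>
    glRho n K (Matrix.SpecialLinearGroup.toGL g) with hS
  set φ : Kˣ →* Equiv.Perm {v : Fin n → K // v ≠ 0} := (glRho n K).comp (sUnit n K) with hφ
  have hφ_apply : ∀ (α : Kˣ) (v : {v : Fin n → K // v ≠ 0}),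
      (φ α v : Fin n → K) = (α : K) • (v : Fin n → K) := by
    intro α v
    rw [hφ, MonoidHom.comp_apply, glRho_apply, sUnit_mulVec]
  have hrange : Subgroup.centralizer S = φ.range := by
    ext σ
    rw [centralizer_iff hn σ, MonoidHom.mem_range]
    constructor
    · rintro ⟨α, hα⟩
      exact ⟨α, Equiv.ext fun v => Subtype.ext (by rw [hφ_apply, hα])⟩
    · rintro ⟨α, rfl⟩
      exact ⟨α, hφ_apply α⟩
  have hinj : Function.Injective φ := by
    intro α β h
    have hv0 : (fun i : Fin n => if i = ⟨0, by omega⟩ then (1 : K) else 0) ≠ 0 := by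
      intro h0
      have := congrFun h0 ⟨0, by omega⟩
      simp at this
    have h1 : (φ α ⟨_, hv0⟩ : Fin n → K) = (φ β ⟨_, hv0⟩ : Fin n → K) := by rw [h]
    rw [hφ_apply, hφ_apply] at h1
    have := congrFun h1 ⟨0, by omega⟩
    simp at this
    exact Units.ext this
  refine ⟨?_, fun σ => centralizer_iff hn σ, ?_, ?_⟩
  · ext σ
    constructor
    · intro hσ
      obtain ⟨α, hα⟩ := (centralizer_iff hn σ).1 hσ
      exact Subgroup.mem_map.2 ⟨sUnit n K α, sUnit_mem_center α,
        Equiv.ext fun v => Subtype.ext (by rw [glRho_apply, sUnit_mulVec, hα])⟩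
    · intro hσ
      obtain ⟨u, hu, rfl⟩ := Subgroup.mem_map.1 hσ
      rw [Subgroup.mem_centralizer_iff]
      rintro - ⟨g, rfl⟩
      show glRho n K (Matrix.SpecialLinearGroup.toGL g) * glRho n K u
          = glRho n K u * glRho n K (Matrix.SpecialLinearGroup.toGL g)
      rw [← _root_.map_mul, ← _root_.map_mul, Subgroup.mem_center_iff.1 hu _]
  · rw [hrange]
    exact isCyclic_of_surjective φ.rangeRestrict φ.rangeRestrict_surjective
  · rw [hrange]
    have : Nat.card φ.range = Nat.card Kˣ :=
      Nat.card_congr ((Equiv.setCongr (MonoidHom.coe_range φ)).trans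
        (Equiv.ofInjective φ hinj).symm)
    rw [this, Nat.card_units, Nat.card_eq_fintype_card, hK]
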